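/- The set E_X = {E(F;v) : v ∈ A*, F ⊆ A* finite} ∪ {0} is closed under multiplication, and for any word w ∈ A* and any e ∈ E_X, the element s_w* e s_w again lies in E_X. Specifically, if w = vz then s_w* E(F;v) s_w = E({w} ∪ Fz; ε), and if v = wz then s_w* E(F;v) s_w = E(F ∪ {wz}; z). -/
import Mathlib


open Function

/-- The one-sided shift map on `ℕ → A`. -/
def shft {A : Type*} (x : ℕ → A) : ℕ → A := fun n => x (n + 1)

/-- Concatenation of a finite word `w` with an infinite word `x`. -/
def wcat {A : Type*} (w : List A) (x : ℕ → A) : ℕ → A :=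
  fun n => w.getD n (x (n - w.length))

/-- Partial bijections on `ℕ → A` modelled as relations (sets of pairs (input, output)). -/
abbrev PB (A : Type*) := Set ((ℕ → A) × (ℕ → A))

/-- Composition on the largest possible domain: `rcomp r s` applies `s` first, then `r`
(i.e. the semigroup product `r · s`). -/
def rcomp {A : Type*} (r s : PB A) : PB A := {p | ∃ y, (p.1, y) ∈ s ∧ (y, p.2) ∈ r}

/-- Inverse of a partial bijection. -/
def rinv {A : Type*} (r : PB A) : PB A := {p | (p.2, p.1) ∈ r}

/-- The identity map on a subset `U`. -/
def idOn {A : Type*} (U : Set (ℕ → A)) : PB A := {p | p.1 ∈ U ∧ p.2 = p.1}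

/-- The partial bijection `s_μ : x ↦ μx` on `{x ∈ X : μx ∈ X}`. -/
def sMap {A : Type*} (X : Set (ℕ → A)) (μ : List A) : PB A :=
  {p | p.1 ∈ X ∧ wcat μ p.1 ∈ X ∧ p.2 = wcat μ p.1}

/-- The cylinder set `C(v) = {vx : x ∈ A^ℕ} ∩ X`. -/
def Cyl {A : Type*} (X : Set (ℕ → A)) (v : List A) : Set (ℕ → A) :=
  {y | y ∈ X ∧ ∃ x, y = wcat v x}

/-- `C(μ,ν) = {νx ∈ X : μx ∈ X}`. -/
def Cmn {A : Type*} (X : Set (ℕ → A)) (μ ν : List A) : Set (ℕ → A) :=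
  {y | ∃ x, y = wcat ν x ∧ y ∈ X ∧ wcat μ x ∈ X}

/-- `C(F;v) = {vx ∈ X : fx ∈ X for all f ∈ F}`. -/
def CFv {A : Type*} (X : Set (ℕ → A)) (F : Finset (List A)) (v : List A) : Set (ℕ → A) :=
  {y | ∃ x, y = wcat v x ∧ y ∈ X ∧ ∀ f ∈ F, wcat f x ∈ X}

/-- The idempotent `E(F;v) = Id_{C(F;v)}`. -/
def Efv {A : Type*} (X : Set (ℕ → A)) (F : Finset (List A)) (v : List A) : PB A :=
  idOn (CFv X F v)

/-- The set `E_X = {E(F;v)} ∪ {0}` of idempotents. -/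
def EXset {A : Type*} (X : Set (ℕ → A)) : Set (PB A) :=
  {r | r = ∅ ∨ ∃ (F : Finset (List A)) (v : List A), r = Efv X F v}

/-- The element `s_α E(F;v) s_β^*` of `I(X)`. -/
def elt {A : Type*} (X : Set (ℕ → A)) (α : List A) (F : Finset (List A)) (v β : List A) :
    PB A :=
  rcomp (rcomp (sMap X α) (Efv X F v)) (rinv (sMap X β))

/-- The inverse semigroup `S_X = {s_α E(F;v) s_β^*} ∪ {0}` (closed form). -/
def SXset {A : Type*} (X : Set (ℕ → A)) : Set (PB A) :=
  {r | r = ∅ ∨ ∃ (α β v : List A) (F : Finset (List A)), r = elt X α F v β}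

/-- `α` and `β` are in lowest terms: they do not both end with the same letter. -/
def LowTerms {A : Type*} (α β : List A) : Prop :=
  ∀ a : A, ¬(α.getLast? = some a ∧ β.getLast? = some a)

/-- A word viewed as an element of the free group on `A`. -/
def wgrp {A : Type*} (w : List A) : FreeGroup A := (w.map FreeGroup.of).prod

/-- Natural partial order on partial bijections: `s ≤ t` iff `t s^* s = s`. -/
def rle {A : Type*} (s t : PB A) : Prop := rcomp t (rcomp (rinv s) s) = s

/-- `P_k(x) = {μ ∈ A^k : μx ∈ X}`. -/
def Pk {A : Type*} (X : Set (ℕ → A)) (k : ℕ) (x : ℕ → A) : Set (List A) :=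
  {μ | μ.length = k ∧ wcat μ x ∈ X}

/-- `l`-past equivalence: `P_r(x) = P_r(y)` for all `r ≤ l`. -/
def pastEq {A : Type*} (X : Set (ℕ → A)) (l : ℕ) (x y : ℕ → A) : Prop :=
  ∀ r ≤ l, Pk X r x = Pk X r y

/-- The relation `x ~_{(k,l)} y`. -/
def klEq {A : Type*} (X : Set (ℕ → A)) (k l : ℕ) (x y : ℕ → A) : Prop :=
  (∀ i < k, x i = y i) ∧ pastEq X l (shft^[k] x) (shft^[k] y)

theorem wcat_nil {A : Type*} (x : ℕ → A) : wcat [] x = x := by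
  funext n; simp [wcat]

theorem wcat_append {A : Type*} (a b : List A) (x : ℕ → A) :
    wcat (a ++ b) x = wcat a (wcat b x) := by
  funext n
  simp only [wcat, List.length_append]
  rcases lt_or_ge n a.length with h | h
  · rw [List.getD_eq_getElem _ _ (by simp; omega), List.getD_eq_getElem _ _ h,
      List.getElem_append_left h]
  · rw [List.getD_eq_default _ _ h]
    rcases lt_or_ge n (a.length + b.length) with h2 | h2
    · rw [List.getD_eq_getElem _ _ (by simp; omega), List.getD_eq_getElem _ _ (by omega),
        List.getElem_append_right h]
    · rw [List.getD_eq_default _ _ (by simp; omega), List.getD_eq_default _ _ (by omega),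
        Nat.sub_sub]

theorem wcat_inj {A : Type*} {w : List A} {x y : ℕ → A} (h : wcat w x = wcat w y) : x = y := by
  funext n
  have := congrFun h (n + w.length)
  simp only [wcat] at this
  rw [List.getD_eq_default _ _ (by omega), List.getD_eq_default _ _ (by omega)] at this
  simpa using this

theorem wcat_prefix {A : Type*} {v w : List A} {x y : ℕ → A}
    (hle : v.length ≤ w.length) (h : wcat v x = wcat w y) : v <+: w := by
  rw [List.prefix_iff_eq_take]
  apply List.ext_getElem (by simp; omega)
  intro i h1 h2
  have := congrFun h i
  simp only [wcat] at this
  rw [List.getD_eq_getElem _ _ (by simpa using h1),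
    List.getD_eq_getElem _ _ (by simp at h2; omega)] at this
  simpa [this] using (List.getElem_take ..).symm

theorem aux_idOn_empty {A : Type*} : idOn (∅ : Set (ℕ → A)) = ∅ := by
  ext p
  obtain ⟨x, x'⟩ := p; simp [idOn]

theorem aux_rcomp_empty_left {A : Type*} (r : PB A) : rcomp ∅ r = ∅ := by
  ext p
  obtain ⟨x, x'⟩ := p; simp [rcomp]

theorem aux_rcomp_empty_right {A : Type*} (r : PB A) : rcomp r ∅ = ∅ := by
  ext p
  obtain ⟨x, x'⟩ := p; simp [rcomp]

theorem aux_idOn_comp {A : Type*} [DecidableEq A] (U V : Set (ℕ → A)) :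
    rcomp (idOn U) (idOn V) = idOn (U ∩ V) := by
  ext p
  obtain ⟨x, x'⟩ := p
  simp only [rcomp, idOn, Set.mem_setOf_eq, Set.mem_inter_iff]
  constructor
  · rintro ⟨y, ⟨hV, rfl⟩, hU, rfl⟩; exact ⟨⟨hU, hV⟩, rfl⟩
  · rintro ⟨⟨hU, hV⟩, rfl⟩; exact ⟨_, ⟨hV, rfl⟩, hU, rfl⟩

theorem aux_sandwich {A : Type*} (X : Set (ℕ → A)) (w : List A) (U : Set (ℕ → A)) :
    rcomp (rinv (sMap X w)) (rcomp (idOn U) (sMap X w)) =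
      idOn {x | x ∈ X ∧ wcat w x ∈ X ∧ wcat w x ∈ U} := by
  ext p
  obtain ⟨x, x'⟩ := p
  simp only [rcomp, rinv, sMap, idOn, Set.mem_setOf_eq]
  constructor
  · rintro ⟨y, ⟨y1, ⟨hx, hwx, rfl⟩, hU, rfl⟩, hx', hwx', hy⟩
    obtain rfl := wcat_inj hy
    exact ⟨⟨hx, hwx, hU⟩, rfl⟩
  · rintro ⟨⟨hx, hwx, hU⟩, rfl⟩
    exact ⟨_, ⟨_, ⟨hx, hwx, rfl⟩, hU, rfl⟩, hx, hwx, rfl⟩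

theorem aux_CFv_inter {A : Type*} [DecidableEq A] (X : Set (ℕ → A)) (F G : Finset (List A)) (v z : List A) :
    CFv X F v ∩ CFv X G (v ++ z) = CFv X (G ∪ F.image (fun f => f ++ z)) (v ++ z) := by
  ext y
  simp only [Set.mem_inter_iff, CFv, Set.mem_setOf_eq]
  constructor
  · rintro ⟨⟨u, rfl, hyX, hF⟩, ⟨u', hy, -, hG⟩⟩
    have hu : u = wcat z u' := wcat_inj (by rw [wcat_append] at hy; exact hy)
    refine ⟨u', hy, hyX, ?_⟩
    intro f hf
    rcases Finset.mem_union.1 hf with hf | hf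
    · exact hG f hf
    · obtain ⟨g, hg, rfl⟩ := Finset.mem_image.1 hf
      rw [wcat_append, ← hu]; exact hF g hg
  · rintro ⟨u, rfl, hyX, hFG⟩
    refine ⟨⟨wcat z u, by rw [wcat_append], hyX, fun f hf => ?_⟩,
      ⟨u, rfl, hyX, fun g hg => hFG g (Finset.mem_union_left _ hg)⟩⟩
    rw [← wcat_append]
    exact hFG _ (Finset.mem_union_right _ (Finset.mem_image_of_mem _ hf))

theorem aux_CFv_disj {A : Type*} {v w : List A} (h1 : ¬ v <+: w) (h2 : ¬ w <+: v)
    (X : Set (ℕ → A)) (F G : Finset (List A)) :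
    CFv X F v ∩ CFv X G w = ∅ := by
  ext y
  simp only [Set.mem_inter_iff, Set.mem_empty_iff_false, iff_false, not_and]
  rintro ⟨u, rfl, -, -⟩ ⟨u', hy, -, -⟩
  rcases le_total v.length w.length with h | h
  · exact h1 (wcat_prefix h hy)
  · exact h2 (wcat_prefix h hy.symm)

theorem aux_part3 {A : Type*} [DecidableEq A] (X : Set (ℕ → A)) (F : Finset (List A)) (v z : List A) :
    rcomp (rinv (sMap X (v ++ z))) (rcomp (Efv X F v) (sMap X (v ++ z))) =
      Efv X (insert (v ++ z) (F.image (fun f => f ++ z))) [] := by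
  rw [Efv, aux_sandwich, Efv]
  refine congrArg idOn ?_
  ext x
  simp only [Set.mem_setOf_eq, CFv, Finset.mem_insert, Finset.mem_image]
  constructor
  · rintro ⟨hx, hwx, u, hu, -, hF⟩
    obtain rfl : wcat z x = u := wcat_inj (by rw [wcat_append] at hu; exact hu)
    refine ⟨x, (wcat_nil x).symm, hx, ?_⟩
    rintro f (rfl | ⟨g, hg, rfl⟩)
    · exact hwx
    · rw [wcat_append]; exact hF g hg
  · rintro ⟨u, hu, hx, hF⟩
    rw [wcat_nil] at hu; subst hu
    exact ⟨hx, hF _ (Or.inl rfl), wcat z x, by rw [wcat_append], hF _ (Or.inl rfl),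
      fun f hf => by rw [← wcat_append]; exact hF _ (Or.inr ⟨f, hf, rfl⟩)⟩

theorem aux_part4 {A : Type*} [DecidableEq A] (X : Set (ℕ → A)) (F : Finset (List A)) (w z : List A) :
    rcomp (rinv (sMap X w)) (rcomp (Efv X F (w ++ z)) (sMap X w)) =
      Efv X (insert (w ++ z) F) z := by
  rw [Efv, aux_sandwich, Efv]
  refine congrArg idOn ?_
  ext x
  simp only [Set.mem_setOf_eq, CFv, Finset.mem_insert]
  constructor
  · rintro ⟨hx, hwx, u, hu, -, hF⟩
    obtain rfl : x = wcat z u := wcat_inj (by rw [wcat_append] at hu; exact hu)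
    refine ⟨u, rfl, hx, ?_⟩
    rintro f (rfl | hf)
    · rw [wcat_append]; exact hwx
    · exact hF f hf
  · rintro ⟨u, rfl, hx, hF⟩
    exact ⟨hx, by rw [← wcat_append]; exact hF _ (Or.inl rfl),
      u, by rw [wcat_append], by rw [← wcat_append]; exact hF _ (Or.inl rfl),
      fun f hf => hF f (Or.inr hf)⟩

theorem stmt3 {A : Type*} [Fintype A] [DecidableEq A] [TopologicalSpace A] [DiscreteTopology A]
    (X : Set (ℕ → A)) (hXcl : IsClosed X) (hXsh : ∀ x ∈ X, shft x ∈ X) :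
    (∀ e ∈ EXset X, ∀ f ∈ EXset X, rcomp e f ∈ EXset X) ∧
    (∀ (w : List A), ∀ e ∈ EXset X,
        rcomp (rinv (sMap X w)) (rcomp e (sMap X w)) ∈ EXset X) ∧
    (∀ (F : Finset (List A)) (v z : List A),
        rcomp (rinv (sMap X (v ++ z))) (rcomp (Efv X F v) (sMap X (v ++ z))) =
          Efv X (insert (v ++ z) (F.image (fun f => f ++ z))) []) ∧
    (∀ (F : Finset (List A)) (w z : List A),
        rcomp (rinv (sMap X w)) (rcomp (Efv X F (w ++ z)) (sMap X w)) =
          Efv X (insert (w ++ z) F) z) := by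
  refine ⟨?_, ?_, aux_part3 X, aux_part4 X⟩
  · rintro e (rfl | ⟨F, v, rfl⟩) f hf
    · rw [aux_rcomp_empty_left]; exact Or.inl rfl
    rcases hf with rfl | ⟨G, w, rfl⟩
    · rw [aux_rcomp_empty_right]; exact Or.inl rfl
    rw [Efv, Efv, aux_idOn_comp]
    by_cases h1 : v <+: w
    · obtain ⟨z, rfl⟩ := h1
      rw [aux_CFv_inter]
      exact Or.inr ⟨_, _, rfl⟩
    by_cases h2 : w <+: v
    · obtain ⟨z, rfl⟩ := h2
      rw [Set.inter_comm, aux_CFv_inter]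
      exact Or.inr ⟨_, _, rfl⟩
    rw [aux_CFv_disj h1 h2, aux_idOn_empty]
    exact Or.inl rfl
  · rintro w e (rfl | ⟨F, v, rfl⟩)
    · rw [aux_rcomp_empty_left, aux_rcomp_empty_right]; exact Or.inl rfl
    by_cases h1 : v <+: w
    · obtain ⟨z, rfl⟩ := h1
      rw [aux_part3]
      exact Or.inr ⟨_, _, rfl⟩
    by_cases h2 : w <+: v
    · obtain ⟨z, rfl⟩ := h2
      rw [aux_part4]
      exact Or.inr ⟨_, _, rfl⟩
    rw [Efv, aux_sandwich]
    left
    have hS : {x | x ∈ X ∧ wcat w x ∈ X ∧ wcat w x ∈ CFv X F v} = (∅ : Set (ℕ → A)) := by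
      ext x
      simp only [Set.mem_setOf_eq, CFv, Set.mem_empty_iff_false, iff_false]
      rintro ⟨-, -, u, hu, -, -⟩
      rcases le_total w.length v.length with h | h
      · exact h2 (wcat_prefix h hu)
      · exact h1 (wcat_prefix h hu.symm)
    rw [hS, aux_idOn_empty]
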